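/- arXiv:1204.2997 — 4 statements merged into one kernel-verified Lean document; each statement's English description precedes it below -/
import Mathlib

section
/- For k ≥ 2 and a finite set S, the rational functions q_k(S) = e_k(S)/e_{k-1}(S) satisfy k·q_k(S) = Σ_{j∈S} x_j·q_{k-1}(S\{j}) / (x_j + q_{k-1}(S\{j})) in the field of rational functions, wherever the denominators are nonzero. -/
open MvPolynomial

/-- The `k`-th elementary symmetric polynomial in the variables indexed by the finite set `S`. -/
noncomputable def esymmS {σ : Type*} [DecidableEq σ] (S : Finset σ) (k : ℕ) :
    MvPolynomial σ ℝ :=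
  ∑ T ∈ S.powersetCard k, ∏ j ∈ T, X j

/-- The canonical map into the field of rational functions. -/
noncomputable def toK {σ : Type*} :
    MvPolynomial σ ℝ →+* FractionRing (MvPolynomial σ ℝ) :=
  algebraMap _ _

/-- `q_k(S) = e_k(S)/e_{k-1}(S)` in the field of rational functions. -/
noncomputable def qS {σ : Type*} [DecidableEq σ] (S : Finset σ) (k : ℕ) :
    FractionRing (MvPolynomial σ ℝ) :=
  toK (esymmS S k) / toK (esymmS S (k - 1))

lemma esymmS_insert {σ : Type*} [DecidableEq σ] (s : Finset σ) {j : σ} (hj : j ∉ s) (m : ℕ) :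
    esymmS (insert j s) (m+1) = esymmS s (m+1) + X j * esymmS s m := by
  rw [esymmS, Finset.powersetCard_succ_insert hj, Finset.sum_union, esymmS, esymmS,
    Finset.mul_sum]
  · congr 1
    rw [Finset.sum_image]
    · refine Finset.sum_congr rfl fun T hT => ?_
      have hjT : j ∉ T := fun hc => hj ((Finset.mem_powersetCard.mp hT).1 hc)
      rw [Finset.prod_insert hjT]
    · intro T hT U hU hTU
      have hjT : j ∉ T := fun hc => hj ((Finset.mem_powersetCard.mp hT).1 hc)
      have hjU : j ∉ U := fun hc => hj ((Finset.mem_powersetCard.mp hU).1 hc)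
      rw [← Finset.erase_insert hjT, ← Finset.erase_insert hjU, hTU]
  · rw [Finset.disjoint_left]
    intro T hT hT'
    rcases Finset.mem_image.mp hT' with ⟨U, hU, rfl⟩
    exact hj ((Finset.mem_powersetCard.mp hT).1 (Finset.mem_insert_self _ _))

lemma esymmS_erase {σ : Type*} [DecidableEq σ] (S : Finset σ) {j : σ} (hj : j ∈ S) (m : ℕ) :
    esymmS S (m+1) = esymmS (S.erase j) (m+1) + X j * esymmS (S.erase j) m := by
  conv_lhs => rw [← Finset.insert_erase hj]
  exact esymmS_insert _ (Finset.notMem_erase j S) m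

lemma sum_mul_esymmS {σ : Type*} [DecidableEq σ] (S : Finset σ) (m : ℕ) :
    ∑ j ∈ S, X j * esymmS (S.erase j) m = (m + 1 : ℕ) • esymmS S (m+1) := by
  have lhs : ∑ j ∈ S, X j * esymmS (S.erase j) m =
      ∑ j ∈ S, ∑ T ∈ (S.erase j).powersetCard m, ∏ i ∈ insert j T, X i := by
    refine Finset.sum_congr rfl fun j hj => ?_
    rw [esymmS, Finset.mul_sum]
    refine Finset.sum_congr rfl fun T hT => ?_
    have hjT : j ∉ T := fun hc =>
      Finset.notMem_erase j S ((Finset.mem_powersetCard.mp hT).1 hc)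
    rw [Finset.prod_insert hjT]
  have rhs : (m + 1 : ℕ) • esymmS S (m+1) =
      ∑ U ∈ S.powersetCard (m+1), ∑ _j ∈ U, ∏ i ∈ U, X i := by
    rw [esymmS, Finset.smul_sum]
    refine Finset.sum_congr rfl fun U hU => ?_
    rw [Finset.sum_const, (Finset.mem_powersetCard.mp hU).2]
  rw [lhs, rhs, Finset.sum_sigma', Finset.sum_sigma']
  refine Finset.sum_nbij' (fun p => ⟨insert p.1 p.2, p.1⟩) (fun p => ⟨p.2, p.1.erase p.2⟩)
    ?_ ?_ ?_ ?_ ?_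
  · rintro ⟨j, T⟩ hp
    rw [Finset.mem_sigma] at hp ⊢
    obtain ⟨hj, hT⟩ := hp
    rw [Finset.mem_powersetCard] at hT
    have hjT : j ∉ T := fun hc => Finset.notMem_erase j S (hT.1 hc)
    refine ⟨Finset.mem_powersetCard.mpr ⟨?_, ?_⟩, Finset.mem_insert_self _ _⟩
    · exact Finset.insert_subset hj (hT.1.trans (Finset.erase_subset _ _))
    · rw [Finset.card_insert_of_notMem hjT, hT.2]
  · rintro ⟨U, j⟩ hp
    rw [Finset.mem_sigma] at hp ⊢
    obtain ⟨hU, hj⟩ := hp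
    rw [Finset.mem_powersetCard] at hU
    refine ⟨hU.1 hj, Finset.mem_powersetCard.mpr ⟨?_, ?_⟩⟩
    · intro x hx
      rw [Finset.mem_erase] at hx ⊢
      exact ⟨hx.1, hU.1 hx.2⟩
    · rw [Finset.card_erase_of_mem hj, hU.2]
      omega
  · rintro ⟨j, T⟩ hp
    rw [Finset.mem_sigma] at hp
    have hjT : j ∉ T := fun hc =>
      Finset.notMem_erase j S ((Finset.mem_powersetCard.mp hp.2).1 hc)
    simp [Finset.erase_insert hjT]
  · rintro ⟨U, j⟩ hp
    rw [Finset.mem_sigma] at hp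
    simp [Finset.insert_erase hp.2]
  · rintro ⟨j, T⟩ _
    rfl

set_option maxHeartbeats 2000000 in
/-- For `k ≥ 2`, `k·q_k(S) = Σ_{j∈S} x_j·q_{k-1}(S\{j}) / (x_j + q_{k-1}(S\{j}))`
wherever the denominators are nonzero. -/
theorem q_recursion {σ : Type*} [DecidableEq σ] (S : Finset σ) (k : ℕ) (hk : 2 ≤ k)
    (h1 : esymmS S (k - 1) ≠ 0)
    (h2 : ∀ j ∈ S, esymmS (S.erase j) (k - 2) ≠ 0)
    (h3 : ∀ j ∈ S, toK (X j) + qS (S.erase j) (k - 1) ≠ 0) :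
    (k : FractionRing (MvPolynomial σ ℝ)) * qS S k =
      ∑ j ∈ S, toK (X j) * qS (S.erase j) (k - 1) /
        (toK (X j) + qS (S.erase j) (k - 1)) := by
  obtain ⟨m, rfl⟩ : ∃ m, k = m + 2 := ⟨k - 2, by omega⟩
  have hinj : Function.Injective (toK (σ := σ)) :=
    IsFractionRing.injective (MvPolynomial σ ℝ) _
  have htoK : ∀ p : MvPolynomial σ ℝ, p ≠ 0 → toK p ≠ 0 := fun p hp hc =>
    hp (hinj (by simpa using hc))
  simp only [show m + 2 - 1 = m + 1 from rfl, show m + 2 - 2 = m from rfl] at h1 h2 h3 ⊢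
  have key : ∀ j ∈ S, toK (X j) * qS (S.erase j) (m+1) /
      (toK (X j) + qS (S.erase j) (m+1)) =
      toK (X j * esymmS (S.erase j) (m+1)) / toK (esymmS S (m+1)) := by
    intro j hj
    have hd' : toK (esymmS (S.erase j) m) ≠ 0 := htoK _ (h2 j hj)
    have hq : qS (S.erase j) (m+1) =
        toK (esymmS (S.erase j) (m+1)) / toK (esymmS (S.erase j) m) := rfl
    have hsum : toK (X j) + qS (S.erase j) (m+1) =
        toK (esymmS S (m+1)) / toK (esymmS (S.erase j) m) := by
      rw [hq, esymmS_erase S hj m, map_add, map_mul, add_div, mul_div_assoc,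
        div_self hd', mul_one, add_comm]
    rw [hsum, hq, map_mul, ← mul_div_assoc, div_div_div_cancel_right₀ hd']
  rw [Finset.sum_congr rfl key]
  have hsplit : ∑ j ∈ S, toK (X j * esymmS (S.erase j) (m+1)) / toK (esymmS S (m+1)) =
      toK (∑ j ∈ S, X j * esymmS (S.erase j) (m+1)) / toK (esymmS S (m+1)) := by
    rw [map_sum, Finset.sum_div]
  rw [hsplit, sum_mul_esymmS S (m+1)]
  have hq : qS S (m+2) = toK (esymmS S (m+2)) / toK (esymmS S (m+1)) := rfl
  rw [hq, map_nsmul, nsmul_eq_mul, mul_div_assoc]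
end

section
/- A homogeneous polynomial h of degree d on ℝⁿ is hyperbolic with respect to each point e of an open set U ⊆ ℝⁿ if and only if h(z) ≠ 0 for all z in the tube U + iℝⁿ = {x + iy : x ∈ U, y ∈ ℝⁿ}. -/
open MvPolynomial

lemma eval_mul_of_isHomogeneous {σ : Type*} {R : Type*} [CommSemiring R]
    {p : MvPolynomial σ R} {d : ℕ} (hp : p.IsHomogeneous d) (c : R) (z : σ → R) :
    eval (fun i => c * z i) p = c ^ d * eval z p := by
  rw [eval_eq, eval_eq, Finset.mul_sum]
  refine Finset.sum_congr rfl fun k hk => ?_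
  have hdeg : ∑ i ∈ k.support, k i = d := by
    by_contra hne
    exact (mem_support_iff.mp hk) (hp.coeff_eq_zero (by simpa [Finsupp.degree_apply] using hne))
  calc p.coeff k * ∏ i ∈ k.support, (c * z i) ^ k i
      = p.coeff k * ((∏ i ∈ k.support, c ^ k i) * ∏ i ∈ k.support, z i ^ k i) := by
        rw [← Finset.prod_mul_distrib]; simp [mul_pow]
    _ = c ^ d * (p.coeff k * ∏ i ∈ k.support, z i ^ k i) := by
        rw [Finset.prod_pow_eq_pow_sum, hdeg]; ring

/-- `h` is hyperbolic with respect to `e`: `h(e) ≠ 0` and `t ↦ h(x + t·e)` has only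
real roots for every `x ∈ ℝⁿ`. -/
def Hyperbolic {n : ℕ} (h : MvPolynomial (Fin n) ℝ) (e : Fin n → ℝ) : Prop :=
  eval e h ≠ 0 ∧ ∀ (x : Fin n → ℝ) (t : ℂ),
    aeval (fun i => (x i : ℂ) + t * (e i : ℂ)) h = 0 → t.im = 0

/-- A homogeneous polynomial of degree `d` is hyperbolic with respect to each point of an
open set `U` iff it does not vanish on the tube `U + iℝⁿ`. -/
theorem hyperbolic_iff_nonvanishing_tube {n d : ℕ} (h : MvPolynomial (Fin n) ℝ)
    (hd : h.IsHomogeneous d) (U : Set (Fin n → ℝ)) (hU : IsOpen U) :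
    (∀ e ∈ U, Hyperbolic h e) ↔
      ∀ x ∈ U, ∀ y : Fin n → ℝ,
        aeval (fun i => (x i : ℂ) + (y i : ℂ) * Complex.I) h ≠ 0 := by
  have hmap : (MvPolynomial.map (algebraMap ℝ ℂ) h).IsHomogeneous d := hd.map _
  have haev : ∀ g : Fin n → ℂ, aeval g h = eval g (MvPolynomial.map (algebraMap ℝ ℂ) h) :=
    fun g => by rw [aeval_def, eval₂_eq_eval_map]
  constructor
  · intro hyp x hx y hvan
    have key : aeval (fun i => (y i : ℂ) + (-Complex.I) * (x i : ℂ)) h = 0 := by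
      have heq : (fun i => (x i : ℂ) + (y i : ℂ) * Complex.I)
          = fun i => Complex.I * ((y i : ℂ) + (-Complex.I) * (x i : ℂ)) := by
        funext i
        linear_combination (x i : ℂ) * Complex.I_mul_I
      rw [haev, heq, eval_mul_of_isHomogeneous hmap] at hvan
      rw [haev]
      have : (Complex.I : ℂ) ^ d ≠ 0 := pow_ne_zero _ Complex.I_ne_zero
      exact (mul_eq_zero.mp hvan).resolve_left this
    have := (hyp x hx).2 y (-Complex.I) key
    simp at this
  · intro hnv e he
    constructor
    · intro h0
      apply hnv e he 0
      have : (fun i => (e i : ℂ) + ((0 : Fin n → ℝ) i : ℂ) * Complex.I)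
          = fun i => ((e i : ℝ) : ℂ) := by funext i; simp
      rw [this, show (fun i => ((e i : ℝ) : ℂ)) = algebraMap ℝ ℂ ∘ e from rfl,
        aeval_algebraMap_apply]
      have : aeval e h = eval e h := by simp [aeval_def]
      rw [this, h0, map_zero]
    · intro x t hvan
      by_contra him
      have hb : (t.im : ℂ) ≠ 0 := Complex.ofReal_ne_zero.mpr him
      set v : Fin n → ℝ := fun i => -(t.re * e i + x i) / t.im with hv
      have heq : (fun i => (x i : ℂ) + t * (e i : ℂ))
          = fun i => (Complex.I * t.im) * ((e i : ℂ) + (v i : ℂ) * Complex.I) := by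
        funext i
        have hbv : (t.im : ℂ) * (v i : ℂ) = -((t.re : ℂ) * e i + x i) := by
          rw [hv]; push_cast; field_simp
        calc (x i : ℂ) + t * (e i : ℂ)
            = (t.re : ℂ) * e i + x i + Complex.I * t.im * e i := by
              linear_combination (e i : ℂ) * (Complex.re_add_im t).symm
          _ = Complex.I * Complex.I * ((t.im : ℂ) * v i) + Complex.I * t.im * e i := by
              rw [hbv, Complex.I_mul_I]; ring
          _ = (Complex.I * t.im) * ((e i : ℂ) + (v i : ℂ) * Complex.I) := by ring
      have key : aeval (fun i => (e i : ℂ) + (v i : ℂ) * Complex.I) h = 0 := by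
        rw [haev, heq, eval_mul_of_isHomogeneous hmap] at hvan
        have hne : (Complex.I * (t.im : ℂ)) ^ d ≠ 0 :=
          pow_ne_zero _ (mul_ne_zero Complex.I_ne_zero hb)
        rw [haev]
        exact (mul_eq_zero.mp hvan).resolve_left hne
      exact hnv e he v key
end

section
/- Let U ⊆ ℝⁿ be open and connected, and let P_{n,d}(U) be the set of degree-d homogeneous polynomials on ℝⁿ hyperbolic with respect to every e ∈ U. If a sequence (h_k) in P_{n,d}(U) converges pointwise to a polynomial h, then h ∈ P_{n,d}(U) or h ≡ 0. -/
open MvPolynomial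

open Polynomial Filter

set_option linter.unnecessarySimpa false

noncomputable def lineSubst {n : ℕ} (p : MvPolynomial (Fin n) ℝ) (x e : Fin n → ℝ) :
    Polynomial ℝ :=
  MvPolynomial.aeval (fun i => Polynomial.C (x i) + Polynomial.X * Polynomial.C (e i)) p

lemma eval_lineSubst {n : ℕ} (p : MvPolynomial (Fin n) ℝ) (x e : Fin n → ℝ) (t : ℝ) :
    (lineSubst p x e).eval t = eval (fun i => x i + t * e i) p := by
  have h := congrFun (congrArg DFunLike.coe
    (MvPolynomial.comp_aeval (R := ℝ)
      (f := fun i => Polynomial.C (x i) + Polynomial.X * Polynomial.C (e i))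
      (Polynomial.aeval t : Polynomial ℝ →ₐ[ℝ] ℝ))) p
  simp only [AlgHom.comp_apply] at h
  have h1 : (Polynomial.aeval t : Polynomial ℝ →ₐ[ℝ] ℝ) (lineSubst p x e)
      = (lineSubst p x e).eval t := by
    rw [Polynomial.aeval_def, Polynomial.eval₂_eq_eval_map, Algebra.algebraMap_self,
      Polynomial.map_id]
  have h2 : ∀ q : MvPolynomial (Fin n) ℝ, ∀ f : Fin n → ℝ,
      MvPolynomial.aeval f q = eval f q := fun q f =>
    congrFun (congrArg DFunLike.coe (MvPolynomial.coe_aeval_eq_eval (f := f))) q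
  have h3 : (fun i => (Polynomial.aeval t : Polynomial ℝ →ₐ[ℝ] ℝ)
      (Polynomial.C (x i) + Polynomial.X * Polynomial.C (e i))) = fun i => x i + t * e i := by
    funext i; simp; ring
  rw [← h1, lineSubst, h, h3, h2]

lemma evalC_lineSubst {n : ℕ} (p : MvPolynomial (Fin n) ℝ) (x e : Fin n → ℝ) (z : ℂ) :
    ((lineSubst p x e).map (algebraMap ℝ ℂ)).eval z
      = MvPolynomial.aeval (fun i => (x i : ℂ) + z * (e i : ℂ)) p := by
  have h := congrFun (congrArg DFunLike.coe
    (MvPolynomial.comp_aeval (R := ℝ)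
      (f := fun i => Polynomial.C (x i) + Polynomial.X * Polynomial.C (e i))
      (Polynomial.aeval z : Polynomial ℝ →ₐ[ℝ] ℂ))) p
  simp only [AlgHom.comp_apply] at h
  have h3 : (fun i => (Polynomial.aeval z : Polynomial ℝ →ₐ[ℝ] ℂ)
      (Polynomial.C (x i) + Polynomial.X * Polynomial.C (e i)))
      = fun i => (x i : ℂ) + z * (e i : ℂ) := by
    funext i
    simp only [map_add, map_mul, Polynomial.aeval_C, Polynomial.aeval_X, Complex.coe_algebraMap]
  rw [lineSubst, Polynomial.eval_map, ← Polynomial.aeval_def, h, h3]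

lemma coeff_prod_of_natDegree_le' {ι : Type*} [DecidableEq ι] (s : Finset ι)
    (f : ι → Polynomial ℝ) (dd : ι → ℕ) (h : ∀ i ∈ s, (f i).natDegree ≤ dd i) :
    (∏ i ∈ s, f i).coeff (∑ i ∈ s, dd i) = ∏ i ∈ s, (f i).coeff (dd i) := by
  induction s using Finset.induction with
  | empty => simp
  | @insert a s hi ih =>
    rw [Finset.prod_insert hi, Finset.sum_insert hi,
      Polynomial.coeff_mul_add_eq_of_natDegree_le (h _ (Finset.mem_insert_self a s))
        (le_trans (Polynomial.natDegree_prod_le s f)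
          (Finset.sum_le_sum (fun i hi' => h i (Finset.mem_insert_of_mem hi')))),
      ih (fun i hi' => h i (Finset.mem_insert_of_mem hi')), Finset.prod_insert hi]

lemma natDegree_linfactor_le {a b : ℝ} :
    (Polynomial.C a + Polynomial.X * Polynomial.C b).natDegree ≤ 1 := by
  compute_degree

lemma coeff_one_linfactor {a b : ℝ} :
    (Polynomial.C a + Polynomial.X * Polynomial.C b).coeff 1 = b := by
  simp

lemma natDegree_linpow_le {a b : ℝ} (q : ℕ) :
    ((Polynomial.C a + Polynomial.X * Polynomial.C b) ^ q).natDegree ≤ q :=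
  le_trans Polynomial.natDegree_pow_le
    ((Nat.mul_le_mul_left q natDegree_linfactor_le).trans (le_of_eq (mul_one q)))

lemma natDegree_lineSubst_le {n : ℕ} (p : MvPolynomial (Fin n) ℝ) (x e : Fin n → ℝ) :
    (lineSubst p x e).natDegree ≤ p.totalDegree := by
  rw [lineSubst, MvPolynomial.aeval_def, MvPolynomial.eval₂_eq]
  apply Polynomial.natDegree_sum_le_of_forall_le
  intro σ hσ
  refine le_trans (Polynomial.natDegree_mul_le) ?_
  have h1 : (algebraMap ℝ (Polynomial ℝ) (MvPolynomial.coeff σ p)).natDegree = 0 := by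
    simp [Polynomial.algebraMap_eq]
  rw [h1, zero_add]
  refine le_trans (Polynomial.natDegree_prod_le _ _) ?_
  refine le_trans (Finset.sum_le_sum (g := fun i => σ i)
    (fun i _ => natDegree_linpow_le (σ i))) (MvPolynomial.le_totalDegree hσ)

lemma coeff_lineSubst {n d : ℕ} (p : MvPolynomial (Fin n) ℝ) (hp : p.IsHomogeneous d)
    (x e : Fin n → ℝ) : (lineSubst p x e).coeff d = MvPolynomial.eval e p := by
  rw [lineSubst, MvPolynomial.aeval_def, MvPolynomial.eval₂_eq, Polynomial.finset_sum_coeff,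
    MvPolynomial.eval_eq]
  apply Finset.sum_congr rfl
  intro σ hσ
  have hd : ∑ i ∈ σ.support, σ i = d := by
    have := hp (MvPolynomial.mem_support_iff.mp hσ)
    simpa [Finsupp.weight_apply, Finsupp.sum, mul_one] using this
  rw [Polynomial.algebraMap_eq, Polynomial.coeff_C_mul, ← hd,
    coeff_prod_of_natDegree_le' _ _ (fun i => σ i)
      (fun i _ => natDegree_linpow_le (σ i))]
  congr 1
  apply Finset.prod_congr rfl
  intro i _
  have := Polynomial.coeff_pow_of_natDegree_le (m := σ i)
    (natDegree_linfactor_le (a := x i) (b := e i))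
  simpa using this

lemma multiset_prod_abs_ge (z : ℂ) (c : ℝ) (hc : 0 ≤ c) (s : Multiset ℂ)
    (h : ∀ r ∈ s, c ≤ ‖z - r‖) :
    c ^ Multiset.card s ≤ (s.map fun r => ‖z - r‖).prod := by
  induction s using Multiset.induction with
  | empty => simp
  | cons a s ih =>
    rw [Multiset.map_cons, Multiset.prod_cons, Multiset.card_cons, pow_succ']
    refine mul_le_mul (h a (Multiset.mem_cons_self a s))
      (ih fun r hr => h r (Multiset.mem_cons_of_mem hr)) (pow_nonneg hc _)
      (norm_nonneg _)

lemma abs_eval_ge (P : Polynomial ℝ) (d : ℕ) (hdeg : P.natDegree ≤ d) (z : ℂ) (c : ℝ)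
    (hc : 0 ≤ c)
    (hb : ∀ r : ℂ, (P.map (algebraMap ℝ ℂ)).eval r = 0 → c ≤ ‖z - r‖) :
    |P.coeff d| * c ^ d ≤ ‖(P.map (algebraMap ℝ ℂ)).eval z‖ := by
  rcases eq_or_ne P 0 with rfl | hP
  · simpa using mul_nonneg (abs_nonneg _) (pow_nonneg hc d)
  rcases lt_or_eq_of_le hdeg with hlt | hEq
  · rw [Polynomial.coeff_eq_zero_of_natDegree_lt hlt]
    simpa using norm_nonneg _
  set Q := P.map (algebraMap ℝ ℂ) with hQdef
  have hQ0 : Q ≠ 0 := Polynomial.map_ne_zero hP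
  have hsplit : Q.Splits := IsAlgClosed.splits Q
  have hcard : Q.roots.card = Q.natDegree := (Polynomial.splits_iff_card_roots).mp hsplit
  have hnd : Q.natDegree = d := by rw [hQdef, Polynomial.natDegree_map, hEq]
  have hfac := hsplit.eq_prod_roots
  have hev : Q.eval z = Q.leadingCoeff * ((Q.roots.map fun a => z - a)).prod := by
    conv_lhs => rw [hfac]
    rw [Polynomial.eval_mul, Polynomial.eval_C, Polynomial.eval_multiset_prod,
      Multiset.map_map]
    simp
  have habs : ‖Q.eval z‖
      = ‖Q.leadingCoeff‖ * ((Q.roots.map fun a => ‖z - a‖)).prod := by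
    rw [hev, norm_mul, show ‖(Q.roots.map fun a => z - a).prod‖ = _ from
      map_multiset_prod (normHom : ℂ →*₀ ℝ) _, Multiset.map_map]
    rfl
  have hlead : ‖Q.leadingCoeff‖ = |P.coeff d| := by
    rw [Polynomial.leadingCoeff, hnd, hQdef, Polynomial.coeff_map]
    exact (Complex.norm_real _).trans (Real.norm_eq_abs _)
  rw [habs, hlead]
  refine mul_le_mul_of_nonneg_left ?_ (abs_nonneg _)
  have := multiset_prod_abs_ge z c hc Q.roots
    (fun r hr => hb r ((Polynomial.mem_roots hQ0).mp hr))
  rwa [hcard, hnd] at this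

lemma eval_map_eq_interp_sum (D : ℕ) (f : Polynomial ℝ) (hf : f.natDegree ≤ D) (z : ℂ) :
    ((f.map (algebraMap ℝ ℂ)).eval z)
      = ∑ i ∈ Finset.range (D + 1), Complex.ofReal (f.eval (i : ℝ))
          * ((Lagrange.basis (Finset.range (D + 1)) (fun j : ℕ => (j : ℝ)) i).map
              (algebraMap ℝ ℂ)).eval z := by
  have hinj : Set.InjOn (fun j : ℕ => (j : ℝ)) (Finset.range (D + 1)) :=
    fun a _ b _ hab => Nat.cast_injective hab
  have hdeg : f.degree < (Finset.range (D + 1)).card := by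
    rw [Finset.card_range]
    exact lt_of_le_of_lt Polynomial.degree_le_natDegree
      (by exact_mod_cast Nat.lt_succ_of_le hf)
  have hrep := Lagrange.eq_interpolate hinj hdeg
  conv_lhs => rw [hrep]
  rw [Lagrange.interpolate_apply, Polynomial.map_sum, Polynomial.eval_finset_sum]
  refine Finset.sum_congr rfl fun i _ => ?_
  rw [Polynomial.map_mul, Polynomial.map_C, Polynomial.eval_mul, Polynomial.eval_C]
  rfl

lemma tendsto_evalC_of_tendsto_eval (D : ℕ) (P : ℕ → Polynomial ℝ) (G : Polynomial ℝ)
    (hP : ∀ k, (P k).natDegree ≤ D) (hG : G.natDegree ≤ D)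
    (hconv : ∀ t : ℝ, Tendsto (fun k => (P k).eval t) atTop (nhds (G.eval t))) (z : ℂ) :
    Tendsto (fun k => ((P k).map (algebraMap ℝ ℂ)).eval z) atTop
      (nhds (((G.map (algebraMap ℝ ℂ)).eval z))) := by
  have hrw : ∀ k, ((P k).map (algebraMap ℝ ℂ)).eval z
      = ∑ i ∈ Finset.range (D + 1), Complex.ofReal ((P k).eval (i : ℝ))
          * ((Lagrange.basis (Finset.range (D + 1)) (fun j : ℕ => (j : ℝ)) i).map
              (algebraMap ℝ ℂ)).eval z := fun k => eval_map_eq_interp_sum D (P k) (hP k) z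
  rw [eval_map_eq_interp_sum D G hG z]
  simp only [hrw]
  refine tendsto_finset_sum _ fun i _ => ?_
  exact ((Complex.continuous_ofReal.tendsto _).comp (hconv (i : ℝ))).mul_const _

lemma evalC_lineSubst_real {n : ℕ} (p : MvPolynomial (Fin n) ℝ) (x e : Fin n → ℝ) (t : ℝ) :
    ((lineSubst p x e).map (algebraMap ℝ ℂ)).eval ((t : ℝ) : ℂ)
      = Complex.ofReal ((lineSubst p x e).eval t) := by
  rw [Polynomial.eval_map]
  exact Polynomial.eval₂_at_apply _ t

/-- If a sequence of degree-`d` homogeneous polynomials, each hyperbolic with respect to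
every point of an open connected set `U`, converges pointwise to a polynomial `g`, then
`g` is hyperbolic with respect to every point of `U`, or `g ≡ 0`. -/
theorem hyperbolic_closed_under_limits {n d : ℕ} (U : Set (Fin n → ℝ))
    (hUopen : IsOpen U) (hUconn : IsConnected U)
    (h : ℕ → MvPolynomial (Fin n) ℝ) (hdeg : ∀ k, (h k).IsHomogeneous d)
    (hhyp : ∀ k, ∀ e ∈ U, Hyperbolic (h k) e)
    (g : MvPolynomial (Fin n) ℝ)
    (hconv : ∀ x : Fin n → ℝ,
      Filter.Tendsto (fun k => eval x (h k)) Filter.atTop (nhds (eval x g))) :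
    (∀ e ∈ U, Hyperbolic g e) ∨ g = 0 := by
  by_cases hg : g = 0
  · exact Or.inr hg
  left
  -- Step 1: g does not vanish identically on U
  have step1 : ∃ a ∈ U, eval a g ≠ 0 := by
    by_contra h0
    push_neg at h0
    apply hg
    obtain ⟨c, hcU⟩ := hUconn.nonempty
    obtain ⟨ε, εpos, hball⟩ := Metric.isOpen_iff.mp hUopen c hcU
    apply MvPolynomial.funext
    intro x
    set u : Fin n → ℝ := x - c with hu
    set δ : ℝ := ε / (‖u‖ + 1) with hδ
    have δpos : 0 < δ := div_pos εpos (by positivity)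
    have hq0 : lineSubst g c u = 0 := by
      apply Polynomial.eq_zero_of_infinite_isRoot
      apply Set.Infinite.mono (s := Set.Ioo (-δ) δ) ?_ (Set.Ioo_infinite (by linarith))
      intro t ht
      have htδ : |t| < δ := abs_lt.mpr ⟨ht.1, ht.2⟩
      have hmem : (fun i => c i + t * u i) ∈ U := by
        apply hball
        rw [Metric.mem_ball]
        have heq : (fun i => c i + t * u i) = c + t • u := by
          funext i; simp [Pi.add_apply, Pi.smul_apply, smul_eq_mul]
        rw [heq, dist_eq_norm, add_sub_cancel_left, norm_smul, Real.norm_eq_abs]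
        calc |t| * ‖u‖ ≤ δ * ‖u‖ := by
              exact mul_le_mul_of_nonneg_right (le_of_lt htδ) (norm_nonneg u)
          _ < ε := by
              rw [hδ, div_mul_eq_mul_div, div_lt_iff₀ (by positivity)]
              nlinarith [norm_nonneg u]
      show Polynomial.IsRoot _ t
      rw [Polynomial.IsRoot, eval_lineSubst]
      exact h0 _ hmem
    have := eval_lineSubst g c u 1
    rw [hq0] at this
    simp only [Polynomial.eval_zero] at this
    have hx : (fun i => c i + 1 * u i) = x := by funext i; simp [hu]
    rw [hx] at this
    rw [map_zero]
    exact this.symm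
  obtain ⟨a, haU, hga⟩ := step1
  -- Step 2: g vanishes nowhere on U
  have step2 : ∀ e₀ ∈ U, eval e₀ g ≠ 0 := by
    intro e₀ he₀
    obtain ⟨ε, εpos, hball⟩ := Metric.isOpen_iff.mp hUopen e₀ he₀
    set δ : ℝ := ε / (2 * (‖a‖ + 1)) with hδ
    have δpos : 0 < δ := div_pos εpos (by positivity)
    have key : ∀ k, |eval a (h k)| * δ ^ d ≤ |eval e₀ (h k)| := by
      intro k
      have hqdeg : (lineSubst (h k) e₀ a).natDegree ≤ d :=
        le_trans (natDegree_lineSubst_le _ _ _) (hdeg k).totalDegree_le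
      have hb : ∀ r : ℂ, ((lineSubst (h k) e₀ a).map (algebraMap ℝ ℂ)).eval r = 0
          → δ ≤ ‖(0 : ℂ) - r‖ := by
        intro r hr
        have hr2 := hr
        rw [evalC_lineSubst] at hr2
        have him : r.im = 0 := (hhyp k a haU).2 e₀ r hr2
        have hre : ((r.re : ℝ) : ℂ) = r := Complex.ext (by simp) (by simp [him])
        by_contra hcon
        push_neg at hcon
        have habs : ‖(0 : ℂ) - r‖ = ‖r‖ := by
          rw [zero_sub, norm_neg]
        have hlt : |r.re| < δ := lt_of_le_of_lt (Complex.abs_re_le_norm r)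
          (by rw [← habs]; exact hcon)
        have hmem : (fun i => e₀ i + r.re * a i) ∈ U := by
          apply hball
          rw [Metric.mem_ball]
          have heq : (fun i => e₀ i + r.re * a i) = e₀ + r.re • a := by
            funext i; simp [Pi.add_apply, Pi.smul_apply, smul_eq_mul]
          rw [heq, dist_eq_norm, add_sub_cancel_left, norm_smul, Real.norm_eq_abs]
          calc |r.re| * ‖a‖ ≤ δ * ‖a‖ :=
                mul_le_mul_of_nonneg_right (le_of_lt hlt) (norm_nonneg a)
            _ < ε := by
                rw [hδ, div_mul_eq_mul_div, div_lt_iff₀ (by positivity)]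
                nlinarith [norm_nonneg a]
        have h1 := evalC_lineSubst_real (h k) e₀ a r.re
        rw [hre, hr] at h1
        have h2 : (lineSubst (h k) e₀ a).eval r.re = 0 := by exact_mod_cast h1.symm
        rw [eval_lineSubst] at h2
        exact (hhyp k _ hmem).1 h2
      have hmain := abs_eval_ge (lineSubst (h k) e₀ a) d hqdeg 0 δ (le_of_lt δpos) hb
      rw [coeff_lineSubst _ (hdeg k)] at hmain
      have h0 := evalC_lineSubst_real (h k) e₀ a 0
      rw [show ((0:ℝ):ℂ) = (0:ℂ) by norm_num] at h0
      have hq0 : (lineSubst (h k) e₀ a).eval 0 = eval e₀ (h k) := by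
        rw [eval_lineSubst]
        have hx : (fun i => e₀ i + 0 * a i) = e₀ := by funext i; simp
        rw [hx]
      rw [h0, hq0] at hmain
      rwa [Complex.norm_real, Real.norm_eq_abs] at hmain
    have hlim1 : Tendsto (fun k => |eval a (h k)| * δ ^ d) atTop
        (nhds (|eval a g| * δ ^ d)) :=
      (((continuous_abs.tendsto _).comp (hconv a)).mul_const _)
    have hlim2 : Tendsto (fun k => |eval e₀ (h k)|) atTop (nhds (|eval e₀ g|)) :=
      (continuous_abs.tendsto _).comp (hconv e₀)
    have hfin : |eval a g| * δ ^ d ≤ |eval e₀ g| :=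
      le_of_tendsto_of_tendsto' hlim1 hlim2 key
    intro hzero
    rw [hzero] at hfin
    simp only [abs_zero] at hfin
    have : 0 < |eval a g| * δ ^ d := by positivity
    linarith
  intro e heU
  refine ⟨step2 e heU, ?_⟩
  intro x z hz
  -- Step 3: real-rootedness passes to the limit
  set D : ℕ := max d g.totalDegree with hD
  set G : Polynomial ℝ := lineSubst g x e with hGdef
  have hGz : ((G.map (algebraMap ℝ ℂ)).eval z) = 0 := by
    rw [hGdef, evalC_lineSubst]; exact hz
  have hcv : Tendsto (fun k => (((lineSubst (h k) x e).map (algebraMap ℝ ℂ)).eval z)) atTop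
      (nhds ((G.map (algebraMap ℝ ℂ)).eval z)) := by
    apply tendsto_evalC_of_tendsto_eval D _ _
      (fun k => le_trans (natDegree_lineSubst_le _ _ _)
        (le_trans (hdeg k).totalDegree_le (le_max_left _ _)))
      (le_trans (natDegree_lineSubst_le _ _ _) (le_max_right _ _))
    intro t
    rw [eval_lineSubst]
    have : ∀ k, (lineSubst (h k) x e).eval t = eval (fun i => x i + t * e i) (h k) :=
      fun k => eval_lineSubst _ _ _ _
    simp only [this]
    exact hconv _
  have key : ∀ k, |eval e (h k)| * |z.im| ^ d
      ≤ ‖((lineSubst (h k) x e).map (algebraMap ℝ ℂ)).eval z‖ := by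
    intro k
    have hb : ∀ r : ℂ, ((lineSubst (h k) x e).map (algebraMap ℝ ℂ)).eval r = 0
        → |z.im| ≤ ‖z - r‖ := by
      intro r hr
      rw [evalC_lineSubst] at hr
      have him : r.im = 0 := (hhyp k e heU).2 x r hr
      have : (z - r).im = z.im := by simp [him]
      calc |z.im| = |(z - r).im| := by rw [this]
        _ ≤ ‖z - r‖ := Complex.abs_im_le_norm _
    have := abs_eval_ge (lineSubst (h k) x e) d
      (le_trans (natDegree_lineSubst_le _ _ _) (hdeg k).totalDegree_le) z |z.im|
      (abs_nonneg _) hb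
    rwa [coeff_lineSubst _ (hdeg k)] at this
  have hlim1 : Tendsto (fun k => |eval e (h k)| * |z.im| ^ d) atTop
      (nhds (|eval e g| * |z.im| ^ d)) :=
    ((continuous_abs.tendsto _).comp (hconv e)).mul_const _
  have hlim2 : Tendsto
      (fun k => ‖((lineSubst (h k) x e).map (algebraMap ℝ ℂ)).eval z‖) atTop
      (nhds (‖(G.map (algebraMap ℝ ℂ)).eval z‖)) :=
    (continuous_norm.tendsto _).comp hcv
  have hfin : |eval e g| * |z.im| ^ d ≤ ‖(G.map (algebraMap ℝ ℂ)).eval z‖ :=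
    le_of_tendsto_of_tendsto' hlim1 hlim2 key
  rw [hGz] at hfin
  simp only [norm_zero] at hfin
  have hpos : 0 < |eval e g| := abs_pos.mpr (step2 e heU)
  rcases Nat.eq_zero_or_pos d with hd0 | hdpos
  · exfalso
    rw [hd0] at hfin
    simp at hfin
    exact step2 e heU hfin
  · have h1 : |z.im| ^ d ≤ 0 := by
      by_contra hcon
      push_neg at hcon
      nlinarith
    have h2 : |z.im| ^ d = 0 := le_antisymm h1 (by positivity)
    have := pow_eq_zero_iff (Nat.pos_iff_ne_zero.mp hdpos) |>.mp h2
    exact abs_eq_zero.mp this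
end

section
/- Suppose h is hyperbolic with respect to e, q is hyperbolic with respect to e with Λ₊(h,e) ⊆ Λ₊(q,e), and q(x)h(x) = det(Σ_{i=1}^n x_i A_i) where the A_i are symmetric matrices with Σ_i e_i A_i positive definite. Then Λ₊(h,e) = {x ∈ ℝⁿ : Σ_{i=1}^n x_i A_i is positive semidefinite}; in particular Λ₊(h,e) is spectrahedral. -/
open MvPolynomial

/-- The hyperbolicity cone: the closure of the connected component of `{x : h(x) ≠ 0}`
containing `e`. -/
noncomputable def hypCone {n : ℕ} (h : MvPolynomial (Fin n) ℝ) (e : Fin n → ℝ) :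
    Set (Fin n → ℝ) :=
  closure (connectedComponentIn {x | eval x h ≠ 0} e)


lemma prodXsubC_coeff_nonneg (R : Multiset ℂ) (hR : ∀ z ∈ R, z.im = 0 ∧ z.re ≤ 0) :
    ∀ i, 0 ≤ ((R.map fun a => Polynomial.X - Polynomial.C a).prod.coeff i).re ∧
      ((R.map fun a => Polynomial.X - Polynomial.C a).prod.coeff i).im = 0 := by
  induction R using Multiset.induction_on with
  | empty => intro i; simp [Polynomial.coeff_one]; split <;> simp
  | cons a R ih =>
    intro i
    have ha := hR a (Multiset.mem_cons_self a R)
    have hP := ih (fun z hz => hR z (Multiset.mem_cons_of_mem hz))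
    rw [Multiset.map_cons, Multiset.prod_cons, sub_mul, Polynomial.coeff_sub, Polynomial.coeff_C_mul]
    rcases i with _ | i
    · have h0 : (Polynomial.X * (Multiset.map (fun a => Polynomial.X - Polynomial.C a) R).prod).coeff 0 = 0 := by
        simp [Polynomial.mul_coeff_zero]
      rw [h0]
      obtain ⟨h1, h2⟩ := hP 0
      constructor
      · simp [Complex.sub_re, Complex.mul_re, h2]
        nlinarith [ha.2, h1]
      · simp [Complex.sub_im, Complex.mul_im, h2, ha.1]
    · rw [Polynomial.coeff_X_mul]
      obtain ⟨h1, h2⟩ := hP i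
      obtain ⟨h3, h4⟩ := hP (i + 1)
      constructor
      · simp [Complex.sub_re, Complex.mul_re, h4, ha.1]
        nlinarith [ha.2, h3]
      · simp [Complex.sub_im, Complex.mul_im, h4, ha.1, h2]

lemma coeff_mul_lead_nonneg (g : Polynomial ℝ) {d : ℕ} {L : ℝ}
    (hdeg : g.natDegree ≤ d) (htop : g.coeff d = L) (hL : L ≠ 0)
    (hroots : ∀ t : ℂ, ((g.map (algebraMap ℝ ℂ)).eval t = 0) → t.im = 0)
    (hpos : ∀ s : ℝ, 0 ≤ s → g.eval s ≠ 0) :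
    ∀ i, 0 ≤ g.coeff i * L := by
  have hg0 : g ≠ 0 := by
    intro hg
    rw [hg] at htop
    simp at htop
    exact hL htop.symm
  have hnd : g.natDegree = d := le_antisymm hdeg (Polynomial.le_natDegree_of_ne_zero (htop ▸ hL))
  have hlead : g.leadingCoeff = L := by rw [Polynomial.leadingCoeff, hnd, htop]
  set G := g.map (algebraMap ℝ ℂ) with hG
  have hinj : Function.Injective (algebraMap ℝ ℂ) := (algebraMap ℝ ℂ).injective
  have hG0 : G ≠ 0 := by
    simpa [hG, Polynomial.map_eq_zero_iff hinj] using hg0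
  have hGlead : G.leadingCoeff = (L : ℂ) := by
    rw [hG, Polynomial.leadingCoeff_map_of_injective hinj, hlead]; rfl
  have hfac : G = Polynomial.C (L : ℂ) * (G.roots.map fun a => Polynomial.X - Polynomial.C a).prod := by
    rw [← hGlead]
    exact (IsAlgClosed.splits G).eq_prod_roots
  have hre : ∀ z ∈ G.roots, z.im = 0 ∧ z.re ≤ 0 := by
    intro z hz
    have hzr : G.eval z = 0 := (Polynomial.mem_roots hG0).mp hz
    have him : z.im = 0 := hroots z hzr
    refine ⟨him, ?_⟩
    by_contra hre
    push_neg at hre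
    have hzeq : z = ((z.re : ℝ) : ℂ) := Complex.ext rfl (by simp [him])
    have : g.eval z.re = 0 := by
      have h2 : G.eval ((z.re : ℝ) : ℂ) = ((g.eval z.re : ℝ) : ℂ) := by
        rw [hG, Polynomial.eval_map]
        simpa using Polynomial.eval₂_at_apply (algebraMap ℝ ℂ) z.re (p := g)
      rw [← hzeq, hzr] at h2
      exact_mod_cast h2.symm
    exact hpos z.re (le_of_lt hre) this
  intro i
  have hco := prodXsubC_coeff_nonneg G.roots hre i
  have hci : (g.coeff i : ℂ) = (L : ℂ) * ((G.roots.map fun a => Polynomial.X - Polynomial.C a).prod.coeff i) := by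
    have : G.coeff i = (Polynomial.C (L : ℂ) * (G.roots.map fun a => Polynomial.X - Polynomial.C a).prod).coeff i := by
      rw [← hfac]
    rw [hG] at this
    simpa [Polynomial.coeff_map, Polynomial.coeff_C_mul] using this
  set w := ((G.roots.map fun a => Polynomial.X - Polynomial.C a).prod.coeff i) with hw
  have : g.coeff i = L * w.re := by
    have := congrArg Complex.re hci
    simpa [Complex.mul_re, hco.2] using this
  rw [this]
  nlinarith [hco.1, sq_nonneg L]


open Polynomial in
lemma coeff_prod_top {ι R : Type*} [CommSemiring R] (s : Finset ι) (f : ι → Polynomial R) (k : ι → ℕ)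
    (h : ∀ i ∈ s, (f i).natDegree ≤ k i) :
    (∏ i ∈ s, f i).coeff (∑ i ∈ s, k i) = ∏ i ∈ s, (f i).coeff (k i) := by
  classical
  induction s using Finset.induction_on with
  | empty => simp
  | insert a s hx ih =>
    rw [Finset.prod_insert hx, Finset.sum_insert hx, Finset.prod_insert hx,
      coeff_mul_add_eq_of_natDegree_le (h a (Finset.mem_insert_self a s))
        (le_trans (natDegree_prod_le s f) (Finset.sum_le_sum (fun i hi => h i (Finset.mem_insert_of_mem hi)))),
      ih (fun i hi => h i (Finset.mem_insert_of_mem hi))]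

open MvPolynomial

variable {n : ℕ}

noncomputable def rayPoly (e : Fin n → ℝ) : MvPolynomial (Fin n) ℝ →ₐ[ℝ] Polynomial (MvPolynomial (Fin n) ℝ) :=
  MvPolynomial.aeval (fun i => Polynomial.C (MvPolynomial.X i) + Polynomial.C (MvPolynomial.C (e i)) * Polynomial.X)

lemma rayPoly_monomial (e : Fin n → ℝ) (α : Fin n →₀ ℕ) (c : ℝ) :
    rayPoly e (monomial α c) = Polynomial.C (MvPolynomial.C c) *
      ∏ i ∈ α.support, (Polynomial.C (MvPolynomial.X i) + Polynomial.C (MvPolynomial.C (e i)) * Polynomial.X) ^ α i := by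
  rw [rayPoly, MvPolynomial.aeval_monomial, Finsupp.prod]
  rfl

lemma rayPoly_natDegree_le (e : Fin n → ℝ) {g : MvPolynomial (Fin n) ℝ} {d : ℕ}
    (hg : g.IsHomogeneous d) : (rayPoly e g).natDegree ≤ d := by
  conv_lhs => rw [g.as_sum]
  rw [map_sum]
  refine le_trans (Polynomial.natDegree_sum_le _ _) ?_
  rw [Finset.fold_max_le]
  refine ⟨Nat.zero_le d, fun α hα => ?_⟩
  rw [Function.comp, rayPoly_monomial]
  have hdeg : (Finsupp.degree α) = d := by
    have := hg (MvPolynomial.mem_support_iff.mp hα)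
    rwa [Pi.one_def, ← Finsupp.degree_eq_weight_one] at this
  calc (Polynomial.C (MvPolynomial.C (coeff α g)) *
      ∏ i ∈ α.support, (Polynomial.C (MvPolynomial.X i) + Polynomial.C (MvPolynomial.C (e i)) * Polynomial.X) ^ α i).natDegree
      ≤ (Polynomial.C (MvPolynomial.C (coeff α g))).natDegree +
        (∏ i ∈ α.support, (Polynomial.C (MvPolynomial.X i) + Polynomial.C (MvPolynomial.C (e i)) * Polynomial.X) ^ α i).natDegree :=
        Polynomial.natDegree_mul_le
    _ ≤ d := by
        rw [Polynomial.natDegree_C, zero_add]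
        refine le_trans (Polynomial.natDegree_prod_le _ _) ?_
        rw [← hdeg, Finsupp.degree_apply]
        refine Finset.sum_le_sum fun i _ => ?_
        refine le_trans (Polynomial.natDegree_pow_le) ?_
        have h1 : (Polynomial.C (MvPolynomial.X i) + Polynomial.C (MvPolynomial.C (e i)) * Polynomial.X
            : Polynomial (MvPolynomial (Fin n) ℝ)).natDegree ≤ 1 := by
          refine le_trans (Polynomial.natDegree_add_le _ _) ?_
          simp [Polynomial.natDegree_C]
          exact Polynomial.natDegree_C_mul_le _ _ |>.trans Polynomial.natDegree_X_le
        calc α i * (Polynomial.C (MvPolynomial.X i) + Polynomial.C (MvPolynomial.C (e i)) * Polynomial.X).natDegree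
            ≤ α i * 1 := Nat.mul_le_mul_left _ h1
          _ = α i := Nat.mul_one _

lemma rayPoly_coeff_top (e : Fin n → ℝ) {g : MvPolynomial (Fin n) ℝ} {d : ℕ}
    (hg : g.IsHomogeneous d) :
    (rayPoly e g).coeff d = MvPolynomial.C (MvPolynomial.eval e g) := by
  conv_lhs => rw [g.as_sum]
  rw [map_sum, Polynomial.finset_sum_coeff]
  rw [MvPolynomial.eval_eq, map_sum]
  refine Finset.sum_congr rfl fun α hα => ?_
  have hdeg : (Finsupp.degree α) = d := by
    have := hg (MvPolynomial.mem_support_iff.mp hα)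
    rwa [Pi.one_def, ← Finsupp.degree_eq_weight_one] at this
  rw [rayPoly_monomial, Polynomial.coeff_C_mul, ← hdeg, Finsupp.degree_apply,
    coeff_prod_top _ _ _ (fun i _ => ?deg)]
  case deg =>
    refine le_trans (Polynomial.natDegree_pow_le) ?_
    have h1 : (Polynomial.C (MvPolynomial.X i) + Polynomial.C (MvPolynomial.C (e i)) * Polynomial.X
        : Polynomial (MvPolynomial (Fin n) ℝ)).natDegree ≤ 1 := by
      refine le_trans (Polynomial.natDegree_add_le _ _) ?_
      simp [Polynomial.natDegree_C]
      exact Polynomial.natDegree_C_mul_le _ _ |>.trans Polynomial.natDegree_X_le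
    calc α i * _ ≤ α i * 1 := Nat.mul_le_mul_left _ h1
      _ = α i := Nat.mul_one _
  have hfac : ∀ i ∈ α.support,
      ((Polynomial.C (MvPolynomial.X i) + Polynomial.C (MvPolynomial.C (e i)) * Polynomial.X) ^ α i).coeff (α i)
      = MvPolynomial.C (e i ^ α i) := by
    intro i _
    have h1 : (Polynomial.C (MvPolynomial.X i) + Polynomial.C (MvPolynomial.C (e i)) * Polynomial.X
        : Polynomial (MvPolynomial (Fin n) ℝ)).natDegree ≤ 1 := by
      refine le_trans (Polynomial.natDegree_add_le _ _) ?_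
      simp [Polynomial.natDegree_C]
      exact Polynomial.natDegree_C_mul_le _ _ |>.trans Polynomial.natDegree_X_le
    have h2 := Polynomial.coeff_pow_of_natDegree_le (m := α i) h1
    rw [Nat.mul_one] at h2
    rw [h2, Polynomial.coeff_add, Polynomial.coeff_C, Polynomial.coeff_C_mul, Polynomial.coeff_X_one]
    simp [map_pow]
  rw [Finset.prod_congr rfl hfac, map_mul, map_prod]


open MvPolynomial

variable {n : ℕ}

noncomputable def gradePoly : MvPolynomial (Fin n) ℝ →ₐ[ℝ] Polynomial (MvPolynomial (Fin n) ℝ) :=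
  MvPolynomial.aeval (fun i => Polynomial.C (MvPolynomial.X i) * Polynomial.X)

lemma gradePoly_monomial (α : Fin n →₀ ℕ) (c : ℝ) :
    gradePoly (monomial α c) = Polynomial.C (monomial α c) * Polynomial.X ^ α.degree := by
  rw [gradePoly, MvPolynomial.aeval_monomial, Finsupp.prod]
  have : ∀ i ∈ α.support, (Polynomial.C (MvPolynomial.X i) * Polynomial.X
        : Polynomial (MvPolynomial (Fin n) ℝ)) ^ α i
      = Polynomial.C (MvPolynomial.X i ^ α i) * Polynomial.X ^ α i := by
    intro i _
    rw [mul_pow, ← map_pow]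
  rw [Finset.prod_congr rfl this, Finset.prod_mul_distrib, ← map_prod,
    Finset.prod_pow_eq_pow_sum, monomial_eq, Finsupp.prod, Finsupp.degree_apply]
  have : (algebraMap ℝ (Polynomial (MvPolynomial (Fin n) ℝ))) c = Polynomial.C (MvPolynomial.C c) := rfl
  rw [this, map_mul, ← mul_assoc]

lemma coeff_gradePoly (g : MvPolynomial (Fin n) ℝ) (k : ℕ) :
    (gradePoly g).coeff k = homogeneousComponent k g := by
  conv_lhs => rw [g.as_sum]
  rw [map_sum, Polynomial.finset_sum_coeff, homogeneousComponent_apply]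
  rw [Finset.sum_filter]
  refine Finset.sum_congr rfl fun α _ => ?_
  rw [gradePoly_monomial, Polynomial.coeff_C_mul, Polynomial.coeff_X_pow]
  by_cases hd : α.degree = k
  · simp [hd]
  · simp [hd, Ne.symm hd]

lemma gradePoly_eval_one (g : MvPolynomial (Fin n) ℝ) :
    Polynomial.eval 1 (gradePoly g) = g := by
  have : (Polynomial.evalRingHom (1 : MvPolynomial (Fin n) ℝ)).comp (gradePoly (n := n)).toRingHom
      = RingHom.id _ := by
    apply MvPolynomial.ringHom_ext
    · intro r; simp [gradePoly]
    · intro i; simp [gradePoly]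
  exact RingHom.congr_fun this g

lemma gradePoly_of_isHomogeneous {g : MvPolynomial (Fin n) ℝ} {d : ℕ} (hg : g.IsHomogeneous d) :
    gradePoly g = Polynomial.C g * Polynomial.X ^ d := by
  ext k
  rw [coeff_gradePoly, Polynomial.coeff_C_mul, Polynomial.coeff_X_pow,
    homogeneousComponent_of_mem hg]
  by_cases hk : k = d
  · simp [hk]
  · simp [hk, Ne.symm hk]

lemma isHomogeneous_of_gradePoly {g : MvPolynomial (Fin n) ℝ} {d : ℕ}
    (hg : gradePoly g = Polynomial.C g * Polynomial.X ^ d) : g.IsHomogeneous d := by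
  have h1 : homogeneousComponent d g = g := by
    rw [← coeff_gradePoly, hg, Polynomial.coeff_C_mul, Polynomial.coeff_X_pow]
    simp
  rw [← h1]
  exact homogeneousComponent_isHomogeneous d g

lemma eq_C_mul_X_pow_of_trailing {R : Type*} [CommRing R] (p : Polynomial R)
    (h : p.natTrailingDegree = p.natDegree) :
    p = Polynomial.C (p.coeff p.natDegree) * Polynomial.X ^ p.natDegree := by
  ext i
  rw [Polynomial.coeff_C_mul, Polynomial.coeff_X_pow]
  rcases lt_trichotomy i p.natDegree with hi | hi | hi
  · rw [Polynomial.coeff_eq_zero_of_lt_natTrailingDegree (by omega)]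
    simp [ne_of_lt hi]
  · simp [hi]
  · rw [Polynomial.coeff_eq_zero_of_natDegree_lt hi]
    simp [ne_of_gt hi]

/-- Factors of a nonzero homogeneous real polynomial are homogeneous. -/
lemma isHomogeneous_factor {a b : MvPolynomial (Fin n) ℝ} {m : ℕ}
    (hab : (a * b).IsHomogeneous m) (ha : a ≠ 0) (hb : b ≠ 0) :
    a.IsHomogeneous ((gradePoly a).natDegree) ∧ b.IsHomogeneous ((gradePoly b).natDegree) ∧
      (gradePoly a).natDegree + (gradePoly b).natDegree = m := by
  have hab0 : a * b ≠ 0 := mul_ne_zero ha hb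
  have ha' : gradePoly a ≠ 0 := fun hz => ha (by rw [← gradePoly_eval_one a, hz]; simp)
  have hb' : gradePoly b ≠ 0 := fun hz => hb (by rw [← gradePoly_eval_one b, hz]; simp)
  have hprod : gradePoly a * gradePoly b = Polynomial.C (a * b) * Polynomial.X ^ m := by
    rw [← map_mul]; exact gradePoly_of_isHomogeneous hab
  have hnd : (gradePoly a).natDegree + (gradePoly b).natDegree = m := by
    rw [← Polynomial.natDegree_mul ha' hb', hprod, Polynomial.natDegree_C_mul_X_pow _ _ hab0]
  have hntd : (gradePoly a).natTrailingDegree + (gradePoly b).natTrailingDegree = m := by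
    rw [← Polynomial.natTrailingDegree_mul ha' hb', hprod, Polynomial.C_mul_X_pow_eq_monomial,
      Polynomial.natTrailingDegree_monomial hab0]
  have hta : (gradePoly a).natTrailingDegree = (gradePoly a).natDegree := by
    have h1 := Polynomial.natTrailingDegree_le_natDegree (gradePoly a)
    have h2 := Polynomial.natTrailingDegree_le_natDegree (gradePoly b)
    omega
  have htb : (gradePoly b).natTrailingDegree = (gradePoly b).natDegree := by
    have h1 := Polynomial.natTrailingDegree_le_natDegree (gradePoly a)
    have h2 := Polynomial.natTrailingDegree_le_natDegree (gradePoly b)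
    omega
  have hma := eq_C_mul_X_pow_of_trailing _ hta
  have hmb := eq_C_mul_X_pow_of_trailing _ htb
  have hca : (gradePoly a).coeff (gradePoly a).natDegree = a := by
    have := congrArg (Polynomial.eval (1 : MvPolynomial (Fin n) ℝ)) hma
    rw [gradePoly_eval_one] at this
    simpa using this.symm
  have hcb : (gradePoly b).coeff (gradePoly b).natDegree = b := by
    have := congrArg (Polynomial.eval (1 : MvPolynomial (Fin n) ℝ)) hmb
    rw [gradePoly_eval_one] at this
    simpa using this.symm
  rw [hca] at hma
  rw [hcb] at hmb
  exact ⟨isHomogeneous_of_gradePoly hma, isHomogeneous_of_gradePoly hmb, hnd⟩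


open MvPolynomial

variable {n m : ℕ}

noncomputable def detPoly (A : Fin n → Matrix (Fin m) (Fin m) ℝ) : MvPolynomial (Fin n) ℝ :=
  (Matrix.of fun j k : Fin m => ∑ i, MvPolynomial.C (A i j k) * MvPolynomial.X i).det

lemma eval_detPoly (A : Fin n → Matrix (Fin m) (Fin m) ℝ) (x : Fin n → ℝ) :
    eval x (detPoly A) = (∑ i, x i • A i).det := by
  rw [detPoly, RingHom.map_det]
  congr 1
  ext j k
  simp [Matrix.map_apply, Matrix.sum_apply, mul_comm]

lemma isHomogeneous_detPoly (A : Fin n → Matrix (Fin m) (Fin m) ℝ) :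
    (detPoly A).IsHomogeneous m := by
  rw [detPoly, Matrix.det_apply]
  apply IsHomogeneous.sum
  intro σ _
  have hentry : ∀ j k : Fin m, ((Matrix.of fun j k : Fin m =>
      ∑ i, MvPolynomial.C (A i j k) * MvPolynomial.X i) j k).IsHomogeneous 1 := by
    intro j k
    simp only [Matrix.of_apply]
    apply IsHomogeneous.sum
    intro i _
    exact (isHomogeneous_X ℝ i).C_mul (A i j k)
  have hprod : (∏ j, (Matrix.of fun j k : Fin m =>
      ∑ i, MvPolynomial.C (A i j k) * MvPolynomial.X i) (σ j) j).IsHomogeneous m := by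
    have := IsHomogeneous.prod (Finset.univ : Finset (Fin m))
      (fun j => (Matrix.of fun j k : Fin m => ∑ i, MvPolynomial.C (A i j k) * MvPolynomial.X i) (σ j) j)
      (fun _ => 1) (fun j _ => hentry (σ j) j)
    simpa using this
  rw [Units.smul_def, zsmul_eq_mul]
  have : ((Equiv.Perm.sign σ : ℤ) : MvPolynomial (Fin n) ℝ)
      = MvPolynomial.C ((Equiv.Perm.sign σ : ℤ) : ℝ) := by
    rw [map_intCast]
  rw [this]
  exact hprod.C_mul _

lemma rayPoly_eval (e : Fin n → ℝ) (g : MvPolynomial (Fin n) ℝ) (x : Fin n → ℝ) (s : ℝ) :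
    ((rayPoly e g).map (MvPolynomial.eval x)).eval s = MvPolynomial.eval (fun i => x i + s * e i) g := by
  have : (Polynomial.evalRingHom s).comp ((Polynomial.mapRingHom (MvPolynomial.eval x)).comp
      (rayPoly e).toRingHom) = (MvPolynomial.eval (fun i => x i + s * e i)) := by
    apply MvPolynomial.ringHom_ext
    · intro r; simp [rayPoly]
    · intro i; simp [rayPoly]; ring
  exact RingHom.congr_fun this g

lemma rayPoly_ceval (e : Fin n → ℝ) (g : MvPolynomial (Fin n) ℝ) (x : Fin n → ℝ) (t : ℂ) :
    (((rayPoly e g).map (MvPolynomial.eval x)).map (algebraMap ℝ ℂ)).eval t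
      = MvPolynomial.aeval (fun i => (x i : ℂ) + t * (e i : ℂ)) g := by
  have : (Polynomial.evalRingHom t).comp ((Polynomial.mapRingHom (algebraMap ℝ ℂ)).comp
      ((Polynomial.mapRingHom (MvPolynomial.eval x)).comp (rayPoly e).toRingHom))
      = (MvPolynomial.aeval (fun i => (x i : ℂ) + t * (e i : ℂ)) : MvPolynomial (Fin n) ℝ →ₐ[ℝ] ℂ).toRingHom := by
    apply MvPolynomial.ringHom_ext
    · intro r; simp [rayPoly]
    · intro i; simp [rayPoly]; ring
  exact RingHom.congr_fun this g
lemma hypCone_ray_pos {n : ℕ} (g : MvPolynomial (Fin n) ℝ) (e : Fin n → ℝ) {d : ℕ}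
    (hgh : Hyperbolic g e) (hom : g.IsHomogeneous d) :
    ∀ x ∈ hypCone g e, ∀ s : ℝ, 0 < s → 0 < eval (fun i => x i + s * e i) g * eval e g := by
  have hL : eval e g ≠ 0 := hgh.1
  set L := eval e g with hLdef
  have hLL : 0 < L * L := mul_self_pos.mpr hL
  set c : ℕ → MvPolynomial (Fin n) ℝ := fun i => (rayPoly e g).coeff i with hc
  have hcoeff : ∀ (x : Fin n → ℝ) (i : ℕ),
      ((rayPoly e g).map (MvPolynomial.eval x)).coeff i = eval x (c i) := by
    intro x i; rw [Polynomial.coeff_map]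
  have hndeg : ∀ x : Fin n → ℝ, ((rayPoly e g).map (MvPolynomial.eval x)).natDegree ≤ d :=
    fun x => le_trans Polynomial.natDegree_map_le (rayPoly_natDegree_le e hom)
  have htop : ∀ x : Fin n → ℝ, eval x (c d) = L := by
    intro x
    rw [hc]
    simp only [rayPoly_coeff_top e hom]
    rw [eval_C]
  set K : Set (Fin n → ℝ) := {x | ∀ s : ℝ, 0 ≤ s → 0 < eval (fun i => x i + s * e i) g * L}
    with hK
  set F : Set (Fin n → ℝ) := {x | ∀ i : ℕ, 0 ≤ eval x (c i) * L} with hF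
  -- continuity helpers
  have hcont1 : ∀ p : MvPolynomial (Fin n) ℝ, Continuous fun x : Fin n → ℝ => eval x p :=
    fun p => MvPolynomial.continuous_eval p
  -- K ⊆ F
  have hKF : K ⊆ F := by
    intro x hx i
    have := coeff_mul_lead_nonneg ((rayPoly e g).map (MvPolynomial.eval x))
      (hndeg x) (by rw [hcoeff, htop]) hL ?roots ?pos i
    · rwa [hcoeff] at this
    case roots =>
      intro t ht
      apply hgh.2 x t
      rwa [rayPoly_ceval] at ht
    case pos =>
      intro s hs
      have := hx s hs
      rw [rayPoly_eval]
      intro hzero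
      rw [hzero] at this
      simp at this
  -- F positivity for s > 0
  have hsum : ∀ (x : Fin n → ℝ) (s : ℝ), eval (fun i => x i + s * e i) g * L
      = ∑ i ∈ Finset.range (d+1), (eval x (c i) * L) * s ^ i := by
    intro x s
    have hev : eval (fun i => x i + s * e i) g
        = ∑ i ∈ Finset.range (d+1), eval x (c i) * s ^ i := by
      rw [← rayPoly_eval e g x s,
        Polynomial.eval_eq_sum_range' (Nat.lt_succ_of_le (hndeg x))]
      exact Finset.sum_congr rfl fun i _ => by rw [hcoeff]
    rw [hev, Finset.sum_mul]
    exact Finset.sum_congr rfl fun i _ => by ring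
  have hFpos : ∀ x ∈ F, ∀ s : ℝ, 0 < s → 0 < eval (fun i => x i + s * e i) g * L := by
    intro x hx s hs
    rw [hsum x s]
    apply Finset.sum_pos'
    · intro i _
      exact mul_nonneg (hx i) (pow_nonneg hs.le i)
    · refine ⟨d, Finset.self_mem_range_succ d, ?_⟩
      rw [htop x]
      exact mul_pos hLL (pow_pos hs d)
  -- the connected component
  set Cs : Set (Fin n → ℝ) := connectedComponentIn {x | eval x g ≠ 0} e with hCs
  have heC : e ∈ Cs := mem_connectedComponentIn hL
  have hpre : IsPreconnected Cs := isPreconnected_connectedComponentIn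
  have hCsub : Cs ⊆ {x | eval x g ≠ 0} := connectedComponentIn_subset _ _
  -- sign on the component
  have hCsign : Cs ⊆ {x | 0 < eval x g * L} := by
    apply hpre.subset_left_of_subset_union
      (u := {x : Fin n → ℝ | 0 < eval x g * L}) (v := {x : Fin n → ℝ | eval x g * L < 0})
      (isOpen_lt continuous_const ((hcont1 g).mul continuous_const))
      (isOpen_lt ((hcont1 g).mul continuous_const) continuous_const)
    · rw [Set.disjoint_left]
      intro x h1 h2
      simp only [Set.mem_setOf_eq] at h1 h2
      linarith
    · intro x hx
      rcases (mul_ne_zero (hCsub hx) hL).lt_or_gt with h | h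
      · exact Or.inr h
      · exact Or.inl h
    · exact ⟨e, heC, hLL⟩
  -- homogeneous scaling
  have hsmul : ∀ (r : ℝ) (x : Fin n → ℝ), eval (fun i => r * x i) g = r ^ d * eval x g := by
    intro r x
    rw [eval_eq, eval_eq, Finset.mul_sum]
    refine Finset.sum_congr rfl fun α hα => ?_
    have hdeg : α.degree = d := by
      have := hom (mem_support_iff.mp hα)
      rwa [Pi.one_def, ← Finsupp.degree_eq_weight_one] at this
    rw [Finset.prod_congr rfl (fun i _ => mul_pow r (x i) (α i)), Finset.prod_mul_distrib,
      Finset.prod_pow_eq_pow_sum]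
    have : ∑ i ∈ α.support, α i = d := by rw [← hdeg]; rfl
    rw [this]; ring
  have heK : e ∈ K := by
    intro s hs
    have h1 : (fun i => e i + s * e i) = fun i => (1 + s) * e i := by funext i; ring
    rw [h1, hsmul]
    have h2 : (1 + s) ^ d * L * L = (1 + s) ^ d * (L * L) := by ring
    rw [h2]
    exact mul_pos (pow_pos (by linarith) d) hLL
  -- F is closed
  have hFclosed : IsClosed F := by
    have : F = ⋂ i : ℕ, {x | 0 ≤ eval x (c i) * L} := by
      ext x; simp [hF, Set.mem_iInter]
    rw [this]
    exact isClosed_iInter fun i =>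
      isClosed_le continuous_const ((hcont1 (c i)).mul continuous_const)
  -- K is open
  have hKopen : IsOpen K := by
    rw [isOpen_iff_mem_nhds]
    intro x₀ hx₀
    set B : ℕ → ℝ := fun i => |eval x₀ (c i) * L| + 1 with hB
    have hBpos : ∀ i, 0 < B i := fun i => by positivity
    set S := ∑ i ∈ Finset.range d, B i with hS
    have hS0 : 0 ≤ S := Finset.sum_nonneg fun i _ => (hBpos i).le
    set R : ℝ := (S + 1) / (L * L) + 1 with hR
    have hR1 : 1 ≤ R := le_add_of_nonneg_left (div_nonneg (by linarith) hLL.le)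
    have hRLL : L * L * R = S + 1 + L * L := by
      rw [hR, mul_add, mul_one, mul_div_cancel₀ _ (ne_of_gt hLL)]
    have hcomp : ∀ᶠ x in nhds x₀, ∀ s ∈ Set.Icc (0:ℝ) R,
        0 < eval (fun i => x i + s * e i) g * L := by
      apply (isCompact_Icc (a := (0:ℝ)) (b := R)).eventually_forall_of_forall_eventually
      intro s hs
      have hcont : Continuous (fun z : (Fin n → ℝ) × ℝ =>
          eval (fun i => z.1 i + z.2 * e i) g * L) := by
        apply Continuous.mul _ continuous_const
        apply (hcont1 g).comp
        apply continuous_pi; intro i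
        exact ((continuous_apply i).comp continuous_fst).add (continuous_snd.mul continuous_const)
      have hval : 0 < eval (fun i => x₀ i + s * e i) g * L := hx₀ s hs.1
      exact (hcont.tendsto (x₀, s)).eventually (eventually_gt_nhds hval)
    have hcoefb : ∀ᶠ x in nhds x₀, ∀ i ∈ Finset.range d, |eval x (c i) * L| < B i := by
      rw [Filter.eventually_all_finset]
      intro i _
      have hcont : Continuous fun x : Fin n → ℝ => |eval x (c i) * L| :=
        ((hcont1 (c i)).mul continuous_const).abs
      have hlt : |eval x₀ (c i) * L| < B i := by rw [hB]; simp only; linarith [abs_nonneg (eval x₀ (c i) * L)]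
      exact (hcont.tendsto x₀).eventually (eventually_lt_nhds hlt)
    filter_upwards [hcomp, hcoefb] with x h1 h2
    intro s hs
    by_cases hsR : s ≤ R
    · exact h1 s ⟨hs, hsR⟩
    · push_neg at hsR
      have hs1 : (1:ℝ) ≤ s := le_trans hR1 hsR.le
      have hs0 : (0:ℝ) < s := lt_of_lt_of_le one_pos hs1
      rw [hsum x s]
      rcases Nat.eq_zero_or_pos d with hd | hd
      · subst hd
        rw [show (0:ℕ)+1 = 1 from rfl, Finset.range_one, Finset.sum_singleton, pow_zero,
          mul_one, htop x]
        exact hLL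
      · obtain ⟨k, rfl⟩ : ∃ k, d = k + 1 := ⟨d - 1, by omega⟩
        rw [Finset.sum_range_succ, htop x]
        have hsk : 0 < s ^ k := pow_pos hs0 k
        have hbound : ∀ i ∈ Finset.range (k+1), -(B i * s ^ k) ≤ (eval x (c i) * L) * s ^ i := by
          intro i hi
          have hile : i ≤ k := Nat.lt_succ_iff.mp (Finset.mem_range.mp hi)
          have h3 : s ^ i ≤ s ^ k := pow_le_pow_right₀ hs1 hile
          have h4 : |eval x (c i) * L| ≤ B i := (h2 i hi).le
          have h5 : |(eval x (c i) * L) * s ^ i| ≤ B i * s ^ k := by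
            rw [abs_mul, abs_of_nonneg (pow_nonneg hs0.le i)]
            exact mul_le_mul h4 h3 (pow_nonneg hs0.le i) (hBpos i).le
          linarith [neg_abs_le ((eval x (c i) * L) * s ^ i)]
        have hsumlb : -(S * s ^ k) ≤ ∑ i ∈ Finset.range (k+1), (eval x (c i) * L) * s ^ i := by
          have hle := Finset.sum_le_sum hbound
          have h6 : S * s ^ k = ∑ i ∈ Finset.range (k+1), B i * s ^ k := by
            rw [hS, Finset.sum_mul]
          calc -(S * s ^ k) = ∑ i ∈ Finset.range (k+1), -(B i * s ^ k) := by
                rw [h6, Finset.sum_neg_distrib]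
            _ ≤ _ := hle
        have hlast : L * L * s ^ (k+1) = (L * L * s) * s ^ k := by ring
        have hLs : S < L * L * s := by nlinarith
        nlinarith
  -- component inside K
  have hCK : Cs ⊆ K := by
    apply hpre.subset_left_of_subset_union hKopen hFclosed.isOpen_compl
    · rw [Set.disjoint_left]
      intro x hxK hxF
      exact hxF (hKF hxK)
    · intro x hx
      by_cases hxF : x ∈ F
      · left
        intro s hs
        rcases eq_or_lt_of_le hs with hs0 | hs0
        · have : (fun i => x i + s * e i) = x := by funext i; rw [← hs0]; ring
          rw [this]
          exact hCsign hx
        · exact hFpos x hxF s hs0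
      · right; exact hxF
    · exact ⟨e, heC, heK⟩
  -- conclusion
  intro x hx s hs
  have hxF : x ∈ F := closure_minimal (hCK.trans hKF) hFclosed hx
  exact hFpos x hxF s hs

variable {m : ℕ}

lemma star_eq_self (v : Fin m → ℝ) : star v = v := by
  funext i; simp

lemma posDef_iff' (M : Matrix (Fin m) (Fin m) ℝ) :
    M.PosDef ↔ M.IsHermitian ∧ ∀ v : Fin m → ℝ, v ≠ 0 → 0 < dotProduct v (M.mulVec v) := by
  rw [Matrix.posDef_iff_dotProduct_mulVec]
  constructor
  · rintro ⟨h1, h2⟩; exact ⟨h1, fun v hv => by simpa [star_eq_self] using h2 hv⟩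
  · rintro ⟨h1, h2⟩; exact ⟨h1, fun v hv => by simpa [star_eq_self] using h2 v hv⟩

lemma posSemidef_iff' (M : Matrix (Fin m) (Fin m) ℝ) :
    M.PosSemidef ↔ M.IsHermitian ∧ ∀ v : Fin m → ℝ, 0 ≤ dotProduct v (M.mulVec v) := by
  rw [Matrix.posSemidef_iff_dotProduct_mulVec]
  constructor
  · rintro ⟨h1, h2⟩; exact ⟨h1, fun v => by simpa [star_eq_self] using h2 v⟩
  · rintro ⟨h1, h2⟩; exact ⟨h1, fun v => by simpa [star_eq_self] using h2 v⟩

lemma continuous_quad (M : Matrix (Fin m) (Fin m) ℝ) :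
    Continuous fun v : Fin m → ℝ => dotProduct v (M.mulVec v) := by
  simp only [dotProduct, Matrix.mulVec]
  apply continuous_finset_sum
  intro i _
  exact (continuous_apply i).mul
    (continuous_finset_sum _ fun j _ => continuous_const.mul (continuous_apply j))

lemma quad_smul (M : Matrix (Fin m) (Fin m) ℝ) (a : ℝ) (v : Fin m → ℝ) :
    dotProduct (a • v) (M.mulVec (a • v)) = a ^ 2 * dotProduct v (M.mulVec v) := by
  rw [Matrix.mulVec_smul, smul_dotProduct, dotProduct_smul]
  simp [smul_eq_mul]; ring

lemma quad_add_smul (B C : Matrix (Fin m) (Fin m) ℝ) (u : ℝ) (v : Fin m → ℝ) :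
    dotProduct v ((B + u • C).mulVec v)
      = dotProduct v (B.mulVec v) + u * dotProduct v (C.mulVec v) := by
  rw [Matrix.add_mulVec, dotProduct_add, Matrix.smul_mulVec,
    dotProduct_smul]
  simp [smul_eq_mul]

lemma isHermitian_add_smul {B C : Matrix (Fin m) (Fin m) ℝ} (hB : B.IsHermitian)
    (hC : C.IsHermitian) (u : ℝ) : (B + u • C).IsHermitian := by
  unfold Matrix.IsHermitian at *
  rw [Matrix.conjTranspose_add, Matrix.conjTranspose_smul, hB, hC]
  simp

lemma posDef_of_sphere {M : Matrix (Fin m) (Fin m) ℝ} (hherm : M.IsHermitian)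
    (hq : ∀ v ∈ Metric.sphere (0 : Fin m → ℝ) 1, 0 < dotProduct v (M.mulVec v)) :
    M.PosDef := by
  rw [posDef_iff']
  refine ⟨hherm, fun v hv => ?_⟩
  have hnv : ‖v‖ ≠ 0 := norm_ne_zero_iff.mpr hv
  set w : Fin m → ℝ := ‖v‖⁻¹ • v with hw
  have hwmem : w ∈ Metric.sphere (0 : Fin m → ℝ) 1 := by
    rw [mem_sphere_zero_iff_norm, hw, norm_smul]
    simp [abs_of_nonneg (norm_nonneg v), inv_mul_cancel₀ hnv]
  have hvw : v = ‖v‖ • w := by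
    rw [hw, smul_smul, mul_inv_cancel₀ hnv, one_smul]
  have hQv : dotProduct v (M.mulVec v) = ‖v‖ ^ 2 * dotProduct w (M.mulVec w) := by
    conv_lhs => rw [hvw]
    rw [quad_smul]
  rw [hQv]
  apply mul_pos _ (hq w hwmem)
  have : 0 < ‖v‖ := lt_of_le_of_ne (norm_nonneg v) (Ne.symm hnv)
  positivity

lemma posDef_perturb (B C : Matrix (Fin m) (Fin m) ℝ) (hB : B.PosDef) (hC : C.IsHermitian) :
    ∃ δ : ℝ, 0 < δ ∧ ∀ u : ℝ, |u| < δ → (B + u • C).PosDef := by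
  by_cases hsp : (Metric.sphere (0 : Fin m → ℝ) 1).Nonempty
  · have hcomp := isCompact_sphere (0 : Fin m → ℝ) 1
    obtain ⟨vB, hvB, hvBmin⟩ := hcomp.exists_isMinOn hsp (continuous_quad B).continuousOn
    obtain ⟨vC, hvC, hvCmax⟩ := hcomp.exists_isMaxOn hsp (continuous_quad C).abs.continuousOn
    set μ := dotProduct vB (B.mulVec vB) with hμ
    set κ := |dotProduct vC (C.mulVec vC)| with hκ
    have hμpos : 0 < μ := by
      apply (posDef_iff' B).mp hB |>.2
      intro h0
      rw [h0] at hvB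
      simp at hvB
    have hκ0 : 0 ≤ κ := abs_nonneg _
    refine ⟨μ / (κ + 1), by positivity, fun u hu => ?_⟩
    apply posDef_of_sphere (isHermitian_add_smul hB.1 hC u)
    intro v hvmem
    rw [quad_add_smul]
    have h1 : μ ≤ dotProduct v (B.mulVec v) := hvBmin hvmem
    have h2 : |dotProduct v (C.mulVec v)| ≤ κ := hvCmax hvmem
    have h3 : |u * dotProduct v (C.mulVec v)| ≤ |u| * κ := by
      rw [abs_mul]
      exact mul_le_mul_of_nonneg_left h2 (abs_nonneg u)
    have h4 : |u| * κ < μ := by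
      calc |u| * κ ≤ |u| * (κ + 1) := by nlinarith [abs_nonneg u]
        _ < μ / (κ + 1) * (κ + 1) := by
            apply mul_lt_mul_of_pos_right hu
            positivity
        _ = μ := by field_simp
    nlinarith [neg_abs_le (u * dotProduct v (C.mulVec v))]
  · refine ⟨1, one_pos, fun u _ => ?_⟩
    apply posDef_of_sphere (isHermitian_add_smul hB.1 hC u)
    intro v hv
    exact absurd ⟨v, hv⟩ hsp

lemma posDef_smul {M : Matrix (Fin m) (Fin m) ℝ} (hM : M.PosDef) {c : ℝ} (hc : 0 < c) :
    (c • M).PosDef := by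
  rw [posDef_iff']
  constructor
  · have := hM.1
    unfold Matrix.IsHermitian at *
    rw [Matrix.conjTranspose_smul, this]
    simp
  · intro v hv
    rw [Matrix.smul_mulVec, dotProduct_smul]
    have := (posDef_iff' M).mp hM |>.2 v hv
    simp [smul_eq_mul]
    positivity
lemma quad_add_mat {m : ℕ} (B C : Matrix (Fin m) (Fin m) ℝ) (v : Fin m → ℝ) :
    dotProduct v ((B + C).mulVec v)
      = dotProduct v (B.mulVec v) + dotProduct v (C.mulVec v) := by
  rw [Matrix.add_mulVec, dotProduct_add]

lemma quad_smul_mat {m : ℕ} (B : Matrix (Fin m) (Fin m) ℝ) (a : ℝ) (v : Fin m → ℝ) :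
    dotProduct v ((a • B).mulVec v) = a * dotProduct v (B.mulVec v) := by
  rw [Matrix.smul_mulVec, dotProduct_smul, smul_eq_mul]

/-- If `h`, `q` are hyperbolic w.r.t. `e` with `Λ₊(h,e) ⊆ Λ₊(q,e)` and
`q·h = det(Σ_i x_i A_i)` for symmetric matrices `A_i` with `Σ_i e_i A_i` positive definite,
then `Λ₊(h,e) = {x : Σ_i x_i A_i ⪰ 0}`; in particular `Λ₊(h,e)` is spectrahedral. -/
theorem hypCone_spectrahedral_of_det_factor {n m : ℕ}
    (h q : MvPolynomial (Fin n) ℝ) (e : Fin n → ℝ)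
    (hh : Hyperbolic h e) (hq : Hyperbolic q e)
    (hcone : hypCone h e ⊆ hypCone q e)
    (A : Fin n → Matrix (Fin m) (Fin m) ℝ) (hA : ∀ i, (A i).IsSymm)
    (hpd : (∑ i, e i • A i).PosDef)
    (hdet : ∀ x : Fin n → ℝ, eval x q * eval x h = (∑ i, x i • A i).det) :
    hypCone h e = {x : Fin n → ℝ | (∑ i, x i • A i).PosSemidef} := by
  classical
  set M : (Fin n → ℝ) → Matrix (Fin m) (Fin m) ℝ := fun x => ∑ i, x i • A i with hM
  have hdet' : ∀ y : Fin n → ℝ, eval y q * eval y h = (M y).det := fun y => hdet y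
  have hpd' : (M e).PosDef := hpd
  have hMherm : ∀ x, (M x).IsHermitian := by
    intro x
    show (M x).conjTranspose = M x
    rw [Matrix.conjTranspose_eq_transpose_of_trivial, hM]
    simp only
    rw [Matrix.transpose_sum]
    refine Finset.sum_congr rfl fun i _ => ?_
    rw [Matrix.transpose_smul, (hA i)]
  have hMadd : ∀ (x : Fin n → ℝ) (s : ℝ), M (fun i => x i + s * e i) = M x + s • M e := by
    intro x s
    rw [hM]
    simp only
    rw [Finset.smul_sum, ← Finset.sum_add_distrib]
    refine Finset.sum_congr rfl fun i _ => ?_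
    rw [add_smul, smul_smul]
  have hh0 : h ≠ 0 := fun hz => hh.1 (by rw [hz]; simp)
  have hq0 : q ≠ 0 := fun hz => hq.1 (by rw [hz]; simp)
  have hqh : q * h = detPoly A := by
    apply MvPolynomial.funext
    intro x
    rw [map_mul, eval_detPoly]
    exact hdet x
  have hPhom : (q * h).IsHomogeneous m := by rw [hqh]; exact isHomogeneous_detPoly A
  obtain ⟨hqhom, hhhom, -⟩ := isHomogeneous_factor hPhom hq0 hh0
  have lemh := hypCone_ray_pos h e hh hhhom
  have lemq := hypCone_ray_pos q e hq hqhom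
  apply Set.eq_of_subset_of_subset
  · -- hypCone h ⊆ PSD
    intro x hx
    have hdetray : ∀ s : ℝ, 0 < s → (M x + s • M e).det ≠ 0 := by
      intro s hs
      rw [← hMadd x s, ← hdet' (fun i => x i + s * e i)]
      have h1 := lemh x hx s hs
      have h2 := lemq x (hcone hx) s hs
      have hq' : eval (fun i => x i + s * e i) q ≠ 0 := by
        intro hz; rw [hz, zero_mul] at h2; exact lt_irrefl 0 h2
      have hh' : eval (fun i => x i + s * e i) h ≠ 0 := by
        intro hz; rw [hz, zero_mul] at h1; exact lt_irrefl 0 h1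
      exact mul_ne_zero hq' hh'
    set U1 : Set ℝ := {s | (M x + s • M e).PosDef} with hU1
    set U2 : Set ℝ := {s | ∃ v : Fin m → ℝ,
      dotProduct v ((M x + s • M e).mulVec v) < 0} with hU2
    have hU1open : IsOpen U1 := by
      rw [Metric.isOpen_iff]
      intro s₀ hs₀
      obtain ⟨δ, hδ, hδp⟩ := posDef_perturb (M x + s₀ • M e) (M e) hs₀ (hMherm e)
      refine ⟨δ, hδ, fun s hsball => ?_⟩
      have hsd : |s - s₀| < δ := by
        rw [Metric.mem_ball, Real.dist_eq] at hsball
        exact hsball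
      have hpd2 := hδp (s - s₀) hsd
      have heq : M x + s₀ • M e + (s - s₀) • M e = M x + s • M e := by
        rw [add_assoc, ← add_smul]
        congr 2
        ring
      rw [heq] at hpd2
      exact hpd2
    have hU2open : IsOpen U2 := by
      have hrw : U2 = ⋃ v : Fin m → ℝ,
          {s : ℝ | dotProduct v ((M x + s • M e).mulVec v) < 0} := by
        ext s; simp [hU2, Set.mem_iUnion]
      rw [hrw]
      apply isOpen_iUnion
      intro v
      have hceq : (fun s : ℝ => dotProduct v ((M x + s • M e).mulVec v))
          = fun s : ℝ => dotProduct v ((M x).mulVec v)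
            + s * dotProduct v ((M e).mulVec v) := by
        funext s; rw [quad_add_smul]
      apply isOpen_lt _ continuous_const
      rw [hceq]
      exact continuous_const.add (continuous_id.mul continuous_const)
    have hcover : Set.Ioi (0:ℝ) ⊆ U1 ∪ U2 := by
      intro s hs
      by_cases h2 : s ∈ U2
      · exact Or.inr h2
      left
      have hpsd : (M x + s • M e).PosSemidef := by
        rw [posSemidef_iff']
        refine ⟨isHermitian_add_smul (hMherm x) (hMherm e) s, fun v => ?_⟩
        by_contra hneg
        push_neg at hneg
        exact h2 ⟨v, hneg⟩
      show (M x + s • M e).PosDef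
      rw [posDef_iff']
      refine ⟨hpsd.1, fun v hv => ?_⟩
      rcases lt_or_eq_of_le (((posSemidef_iff' _).mp hpsd).2 v) with hlt | heq
      · exact hlt
      · exfalso
        have hv0 : (M x + s • M e).mulVec v = 0 := by
          have hiff := hpsd.dotProduct_mulVec_zero_iff v
          rw [star_eq_self] at hiff
          exact hiff.mp heq.symm
        have : (M x + s • M e).det = 0 := by
          rw [← Matrix.exists_mulVec_eq_zero_iff]
          exact ⟨v, hv, hv0⟩
        exact hdetray s (Set.mem_Ioi.mp hs) this
    have hdisj : Disjoint U1 U2 := by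
      rw [Set.disjoint_left]
      rintro s hs1 ⟨v, hv⟩
      have hposall := ((posDef_iff' _).mp hs1).2
      by_cases hv0 : v = 0
      · rw [hv0] at hv; simp at hv
      · linarith [hposall v hv0]
    have hne : (Set.Ioi (0:ℝ) ∩ U1).Nonempty := by
      obtain ⟨δ, hδ, hδp⟩ := posDef_perturb (M e) (M x) hpd' (hMherm x)
      have h1 : (M e + (δ/2) • M x).PosDef :=
        hδp (δ/2) (by rw [abs_of_pos (by positivity)]; linarith)
      refine ⟨2 / δ, Set.mem_Ioi.mpr (by positivity), ?_⟩
      show (M x + (2/δ) • M e).PosDef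
      have heq : M x + (2/δ) • M e = (2/δ) • (M e + (δ/2) • M x) := by
        rw [smul_add, smul_smul]
        have hone : (2/δ) * (δ/2) = 1 := by field_simp
        rw [hone, one_smul, add_comm]
      rw [heq]
      exact posDef_smul h1 (by positivity)
    have hIoi : Set.Ioi (0:ℝ) ⊆ U1 :=
      isPreconnected_Ioi.subset_left_of_subset_union hU1open hU2open hdisj hcover hne
    show (M x).PosSemidef
    rw [posSemidef_iff']
    refine ⟨hMherm x, fun v => ?_⟩
    by_contra hneg
    push_neg at hneg
    have hv0 : v ≠ 0 := by
      rintro rfl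
      simp at hneg
    have hQe : 0 < dotProduct v ((M e).mulVec v) := ((posDef_iff' _).mp hpd').2 v hv0
    set Qx := dotProduct v ((M x).mulVec v) with hQx
    set Qe := dotProduct v ((M e).mulVec v) with hQev
    set s₁ := -Qx / (2 * Qe) with hs₁def
    have hs₁ : 0 < s₁ := div_pos (neg_pos.mpr hneg) (by positivity)
    have hmem := hIoi (Set.mem_Ioi.mpr hs₁)
    have hpos := ((posDef_iff' _).mp hmem).2 v hv0
    rw [quad_add_smul] at hpos
    have hval : Qx + s₁ * Qe = Qx / 2 := by
      rw [hs₁def]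
      field_simp
      ring
    rw [← hQx, ← hQev, hval] at hpos
    linarith
  · -- PSD ⊆ hypCone h
    intro x hx
    have hx' : (M x).PosSemidef := hx
    set D : Set (Fin n → ℝ) := {y | (M y).PosDef} with hD
    have hDconv : Convex ℝ D := by
      intro y hy z hz a b ha hb hab
      have hlin : M (a • y + b • z) = a • M y + b • M z := by
        rw [hM]
        simp only
        rw [Finset.smul_sum, Finset.smul_sum, ← Finset.sum_add_distrib]
        refine Finset.sum_congr rfl fun i _ => ?_
        rw [Pi.add_apply, Pi.smul_apply, Pi.smul_apply, add_smul, smul_eq_mul, smul_eq_mul,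
          ← smul_smul, ← smul_smul]
      show (M (a • y + b • z)).PosDef
      rw [hlin, posDef_iff']
      constructor
      · have h1 := hMherm (a • y + b • z)
        rw [hlin] at h1
        exact h1
      · intro v hv
        rw [quad_add_mat, quad_smul_mat, quad_smul_mat]
        have h1 := ((posDef_iff' _).mp hy).2 v hv
        have h2 := ((posDef_iff' _).mp hz).2 v hv
        rcases lt_or_eq_of_le ha with ha' | ha'
        · nlinarith
        · rw [← ha'] at hab ⊢
          rw [zero_mul, zero_add]
          have hb1 : b = 1 := by linarith
          rw [hb1, one_mul]
          exact h2
    have hDsub : D ⊆ {y | eval y h ≠ 0} := by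
      intro y hy hz
      have hdp : 0 < (M y).det := hy.det_pos
      rw [← hdet' y] at hdp
      rw [hz, mul_zero] at hdp
      exact lt_irrefl 0 hdp
    have heD : e ∈ D := hpd'
    have hDcomp : D ⊆ connectedComponentIn {y | eval y h ≠ 0} e :=
      hDconv.isPreconnected.subset_connectedComponentIn heD hDsub
    have hxt : ∀ t : ℝ, 0 < t → (fun i => x i + t * e i) ∈ D := by
      intro t ht
      show (M (fun i => x i + t * e i)).PosDef
      rw [hMadd x t, posDef_iff']
      refine ⟨isHermitian_add_smul (hMherm x) (hMherm e) t, fun v hv => ?_⟩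
      rw [quad_add_smul]
      have h1 : 0 ≤ dotProduct v ((M x).mulVec v) := ((posSemidef_iff' _).mp hx').2 v
      have h2 : 0 < dotProduct v ((M e).mulVec v) := ((posDef_iff' _).mp hpd').2 v hv
      nlinarith
    have hxcl : x ∈ closure D := by
      have hcont : Continuous (fun t : ℝ => (fun i => x i + t * e i)) := by
        apply continuous_pi; intro i
        exact continuous_const.add (continuous_id.mul continuous_const)
      have htend : Filter.Tendsto (fun t : ℝ => (fun i => x i + t * e i))
          (nhdsWithin 0 (Set.Ioi 0)) (nhds x) := by
        have h0 : (fun i => x i + (0:ℝ) * e i) = x := by funext i; ring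
        have ht := hcont.tendsto 0
        rw [h0] at ht
        exact ht.mono_left nhdsWithin_le_nhds
      apply mem_closure_of_tendsto htend
      filter_upwards [self_mem_nhdsWithin] with t ht
      exact hxt t ht
    exact closure_mono hDcomp hxcl
end
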